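/- Let σ > 0, let X ~ N(0,1) and Δ ~ N(0,σ²) be independent real Gaussian random variables, and set γ = sign(X + Δ) − sign(X). Then Var(γ) = E[γ²] = (4/π)·arctan(σ). -/

import Mathlib

open MeasureTheory ProbabilityTheory Real Set
open scoped NNReal ENNReal

section VSCHelpers

lemma vsc_measurable_sign : Measurable Real.sign := by
  have : Real.sign = fun r : ℝ => if r < 0 then (-1:ℝ) else if 0 < r then 1 else 0 :=
    funext fun r => rfl
  rw [this]
  exact Measurable.ite measurableSet_Iio measurable_const
    (Measurable.ite measurableSet_Ioi measurable_const measurable_const)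

lemma vsc_abs_sign_le (r : ℝ) : |Real.sign r| ≤ 1 := by
  rcases Real.sign_apply_eq r with h | h | h <;> rw [h] <;> norm_num

lemma vsc_sign_mul_pos {r : ℝ} (hr : 0 < r) (t : ℝ) :
    Real.sign (r * t) = Real.sign t := by
  rcases lt_trichotomy t 0 with h | h | h
  · rw [Real.sign_of_neg h, Real.sign_of_neg (mul_neg_of_pos_of_neg hr h)]
  · simp [h]
  · rw [Real.sign_of_pos h, Real.sign_of_pos (mul_pos hr h)]

lemma vsc_cos_dichotomy {θ : ℝ} (h1 : -(π + π/2) < θ) (h2 : θ < π + π/2)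
    (h3 : θ ≠ -(π/2)) (h4 : θ ≠ π/2) :
    (0 < Real.cos θ ∧ (-(π/2) < θ ∧ θ < π/2)) ∨
      (Real.cos θ < 0 ∧ ¬(-(π/2) < θ ∧ θ < π/2)) := by
  by_cases h : -(π/2) < θ ∧ θ < π/2
  · exact Or.inl ⟨Real.cos_pos_of_mem_Ioo ⟨h.1, h.2⟩, h⟩
  · refine Or.inr ⟨?_, h⟩
    rcases not_and_or.mp h with h' | h'
    · push_neg at h'
      have hlt : θ < -(π/2) := lt_of_le_of_ne h' h3
      have := Real.cos_neg_of_pi_div_two_lt_of_lt (x := -θ) (by linarith) (by linarith)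
      rwa [Real.cos_neg] at this
    · push_neg at h'
      have hlt : π/2 < θ := lt_of_le_of_ne h' (Ne.symm h4)
      exact Real.cos_neg_of_pi_div_two_lt_of_lt hlt h2

 open scoped NNReal ENNReal

lemma vsc_pointwise (σ : ℝ) (hσ : 0 < σ) {θ : ℝ} (h1 : -π < θ) (h2 : θ < π)
    (e1 : θ ≠ -(π/2)) (e2 : θ ≠ π/2) (e3 : θ ≠ arctan σ - π/2) (e4 : θ ≠ arctan σ + π/2) :
    (Real.sign (Real.cos θ + σ * Real.sin θ) - Real.sign (Real.cos θ))^2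
      = (Ioo (-(π/2)) (arctan σ - π/2) ∪ Ioo (π/2) (arctan σ + π/2)).indicator
          (fun _ => (4:ℝ)) θ := by
  set α := arctan σ with hα
  have hα1 : 0 < α := by
    have := Real.arctan_strictMono hσ
    rwa [Real.arctan_zero] at this
  have hα2 : α < π/2 := arctan_lt_pi_div_two σ
  have hπ : 0 < π := Real.pi_pos
  -- rewrite cos θ + σ sin θ
  have hs : (0:ℝ) < Real.sqrt (1 + σ^2) := Real.sqrt_pos.mpr (by positivity)
  have hd : Real.cos θ + σ * Real.sin θ = Real.sqrt (1 + σ^2) * Real.cos (θ - α) := by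
    rw [Real.cos_sub, hα, Real.cos_arctan, Real.sin_arctan]
    field_simp
  have hsign : Real.sign (Real.cos θ + σ * Real.sin θ) = Real.sign (Real.cos (θ - α)) := by
    rw [hd, vsc_sign_mul_pos hs]
  have D1 := vsc_cos_dichotomy (θ := θ) (by linarith) (by linarith) e1 e2
  have D2 := vsc_cos_dichotomy (θ := θ - α) (by linarith) (by linarith)
      (by intro h; apply e3; linarith [h]) (by intro h; apply e4; linarith [h])
  have hmem : ∀ x : ℝ,
      x ∈ Ioo (-(π/2)) (α - π/2) ∪ Ioo (π/2) (α + π/2) ↔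
        (-(π/2) < x ∧ x < α - π/2) ∨ (π/2 < x ∧ x < α + π/2) := by
    intro x; simp [Set.mem_union, Set.mem_Ioo]
  rcases D1 with ⟨hc, hcm⟩ | ⟨hc, hcm⟩ <;> rcases D2 with ⟨hdp, hdm⟩ | ⟨hdp, hdm⟩
  · -- both positive: 0
    rw [hsign, Real.sign_of_pos hc, Real.sign_of_pos hdp,
      Set.indicator_of_notMem]
    · ring
    · rw [hmem]; push_neg
      constructor
      · intro _; linarith [hdm.1]
      · intro h; linarith [hcm.2]
  · -- c > 0, d < 0 : θ ∈ first interval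
    have hθlt : θ - α < -(π/2) := by
      rcases not_and_or.mp hdm with h' | h'
      · push_neg at h'
        exact lt_of_le_of_ne h' (by intro h; exact e3 (by linarith))
      · push_neg at h'; linarith [hcm.2]
    rw [hsign, Real.sign_of_pos hc, Real.sign_of_neg hdp,
      Set.indicator_of_mem]
    · ring
    · rw [hmem]; exact Or.inl ⟨hcm.1, by linarith⟩
  · -- c < 0, d > 0 : θ ∈ second interval
    have hθgt : π/2 < θ := by
      rcases not_and_or.mp hcm with h' | h'
      · push_neg at h'; linarith [hdm.1]
      · push_neg at h'; exact lt_of_le_of_ne h' (Ne.symm e2)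
    rw [hsign, Real.sign_of_neg hc, Real.sign_of_pos hdp,
      Set.indicator_of_mem]
    · ring
    · rw [hmem]; exact Or.inr ⟨hθgt, by linarith [hdm.2]⟩
  · -- both negative : 0
    rw [hsign, Real.sign_of_neg hc, Real.sign_of_neg hdp,
      Set.indicator_of_notMem]
    · ring
    · rw [hmem]; push_neg
      constructor
      · intro h
        have h2' : ¬(θ < π/2) := fun hh => hcm ⟨h, hh⟩
        push_neg at h2'; linarith
      · intro h
        have h2' : ¬(θ - α < π/2) := fun hh => hdm ⟨by linarith, hh⟩
        push_neg at h2'; linarith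

lemma vsc_angle_integral (σ : ℝ) (hσ : 0 < σ) :
    ∫ θ in Ioo (-π) π,
        (Real.sign (Real.cos θ + σ * Real.sin θ) - Real.sign (Real.cos θ))^2
      = 8 * arctan σ := by
  set α := arctan σ with hα
  have hα1 : 0 < α := by
    have := Real.arctan_strictMono hσ
    rwa [Real.arctan_zero] at this
  have hα2 : α < π/2 := arctan_lt_pi_div_two σ
  have hπ : 0 < π := Real.pi_pos
  set B : Set ℝ := Ioo (-(π/2)) (α - π/2) ∪ Ioo (π/2) (α + π/2) with hB
  have hBm : MeasurableSet B := (measurableSet_Ioo).union measurableSet_Ioo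
  have hN : ∀ᵐ θ : ℝ, θ ∉ ({-(π/2), π/2, α - π/2, α + π/2} : Set ℝ) := by
    have h0 : (volume ({-(π/2), π/2, α - π/2, α + π/2} : Set ℝ)) = 0 := by
      apply Set.Finite.measure_zero
      exact (Set.finite_singleton _).insert _ |>.insert _ |>.insert _
    exact measure_eq_zero_iff_ae_notMem.mp h0
  have hcongr : ∫ θ in Ioo (-π) π,
      (Real.sign (Real.cos θ + σ * Real.sin θ) - Real.sign (Real.cos θ))^2
      = ∫ θ in Ioo (-π) π, B.indicator (fun _ => (4:ℝ)) θ := by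
    apply setIntegral_congr_ae measurableSet_Ioo
    filter_upwards [hN] with θ hθ hmem
    simp only [Set.mem_insert_iff, Set.mem_singleton_iff, not_or] at hθ
    exact vsc_pointwise σ hσ hmem.1 hmem.2 hθ.1 hθ.2.1 hθ.2.2.1 hθ.2.2.2
  rw [hcongr, setIntegral_indicator hBm]
  have hBsub : Ioo (-π) π ∩ B = B := by
    apply Set.inter_eq_self_of_subset_right
    rw [hB]
    intro x hx
    rcases hx with hx | hx <;> exact ⟨by cases hx; linarith, by cases hx; linarith⟩
  rw [hBsub, setIntegral_const]
  have hdisj : Disjoint (Ioo (-(π/2)) (α - π/2)) (Ioo (π/2) (α + π/2)) := by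
    apply Set.disjoint_left.mpr
    intro x hx hx'
    cases hx; cases hx'; linarith
  rw [hB, measureReal_def, measure_union hdisj measurableSet_Ioo, Real.volume_Ioo, Real.volume_Ioo]
  rw [← ENNReal.ofReal_add (by linarith) (by linarith)]
  rw [ENNReal.toReal_ofReal (by linarith)]
  ring_nf

lemma vsc_gpdf (x : ℝ) :
    gaussianPDFReal 0 1 x = (Real.sqrt (2*π))⁻¹ * Real.exp (-x^2/2) := by
  simp [gaussianPDFReal]

lemma vsc_integral_gaussian_one (h : ℝ → ℝ) :
    ∫ x, h x ∂(gaussianReal 0 1) = ∫ x, gaussianPDFReal 0 1 x * h x := by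
  rw [gaussianReal_of_var_ne_zero 0 one_ne_zero]
  have hpdf : gaussianPDF 0 1
      = fun x => (((gaussianPDFReal 0 1 x).toNNReal) : ENNReal) := rfl
  rw [hpdf, integral_withDensity_eq_integral_smul
    ((measurable_gaussianPDFReal 0 1).real_toNNReal) h]
  congr 1
  funext x
  rw [NNReal.smul_def, smul_eq_mul, Real.coe_toNNReal _ (gaussianPDFReal_nonneg 0 1 x)]

lemma vsc_r_integral : ∫ r in Ioi (0:ℝ), r * Real.exp (-(2⁻¹ * r^2)) = 1 := by
  have hderiv : ∀ x ∈ Ici (0:ℝ),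
      HasDerivAt (fun r : ℝ => -Real.exp (-(2⁻¹ * r^2))) (x * Real.exp (-(2⁻¹ * x^2))) x := by
    intro x _
    have h1 : HasDerivAt (fun r : ℝ => -(2⁻¹ * r^2)) (-x) x := by
      have := (hasDerivAt_pow 2 x).const_mul (2⁻¹ : ℝ)
      have h2 := this.neg
      refine h2.congr_deriv ?_
      push_cast
      ring
    have h3 := (h1.exp).neg
    refine h3.congr_deriv ?_
    ring
  have hint : IntegrableOn (fun x : ℝ => x * Real.exp (-(2⁻¹ * x^2))) (Ioi 0) := by
    have := integrable_mul_exp_neg_mul_sq (b := (2⁻¹:ℝ)) (by norm_num)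
    simp_rw [neg_mul] at this
    exact this.integrableOn
  have htend : Filter.Tendsto (fun r : ℝ => -Real.exp (-(2⁻¹ * r^2)))
      Filter.atTop (nhds 0) := by
    rw [show (0:ℝ) = -0 by norm_num]
    apply Filter.Tendsto.neg
    apply Real.tendsto_exp_atBot.comp
    apply Filter.tendsto_neg_atTop_atBot.comp
    exact (Filter.tendsto_pow_atTop (by norm_num : 2 ≠ 0)).const_mul_atTop (by norm_num)
  have := integral_Ioi_of_hasDerivAt_of_tendsto' hderiv hint htend
  rw [this]
  norm_num

lemma vsc_plane_integral (σ : ℝ) (hσ : 0 < σ) :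
    ∫ p : ℝ × ℝ, gaussianPDFReal 0 1 p.1 * (gaussianPDFReal 0 1 p.2 *
        (Real.sign (p.1 + σ * p.2) - Real.sign p.1)^2)
      = (4/π) * arctan σ := by
  have hπ : 0 < π := Real.pi_pos
  rw [← integral_comp_polarCoord_symm]
  have htar : polarCoord.target = Ioi (0:ℝ) ×ˢ Ioo (-π) π := rfl
  rw [htar]
  have hcongr : ∀ p : ℝ × ℝ, p ∈ Ioi (0:ℝ) ×ˢ Ioo (-π) π →
      p.1 • (gaussianPDFReal 0 1 (polarCoord.symm p).1 *
        (gaussianPDFReal 0 1 (polarCoord.symm p).2 *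
          (Real.sign ((polarCoord.symm p).1 + σ * (polarCoord.symm p).2)
            - Real.sign (polarCoord.symm p).1)^2))
      = ((2*π)⁻¹ * (p.1 * Real.exp (-p.1^2/2))) *
          (Real.sign (Real.cos p.2 + σ * Real.sin p.2) - Real.sign (Real.cos p.2))^2 := by
    rintro ⟨r, θ⟩ ⟨hr, hθ⟩
    simp only [polarCoord_symm_apply] at *
    have hr' : (0:ℝ) < r := hr
    have hs1 : Real.sign (r * Real.cos θ + σ * (r * Real.sin θ))
        = Real.sign (Real.cos θ + σ * Real.sin θ) := by
      rw [show r * Real.cos θ + σ * (r * Real.sin θ)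
          = r * (Real.cos θ + σ * Real.sin θ) by ring, vsc_sign_mul_pos hr']
    have hs2 : Real.sign (r * Real.cos θ) = Real.sign (Real.cos θ) :=
      vsc_sign_mul_pos hr' _
    have hg : gaussianPDFReal 0 1 (r * Real.cos θ) * gaussianPDFReal 0 1 (r * Real.sin θ)
        = (2*π)⁻¹ * Real.exp (-r^2/2) := by
      rw [vsc_gpdf, vsc_gpdf]
      have h1 : -(r * Real.cos θ)^2/2 + -(r * Real.sin θ)^2/2 = -r^2/2 := by
        linear_combination (-(r^2)/2) * (Real.sin_sq_add_cos_sq θ)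
      rw [show (√(2*π))⁻¹ * Real.exp (-(r * Real.cos θ)^2/2) *
            ((√(2*π))⁻¹ * Real.exp (-(r * Real.sin θ)^2/2))
          = (√(2*π))⁻¹ * (√(2*π))⁻¹ *
            (Real.exp (-(r * Real.cos θ)^2/2) * Real.exp (-(r * Real.sin θ)^2/2)) by
        ring]
      rw [← Real.exp_add, h1, ← mul_inv, Real.mul_self_sqrt (by positivity)]
    rw [hs1, hs2, smul_eq_mul]
    calc r * (gaussianPDFReal 0 1 (r * Real.cos θ) *
          (gaussianPDFReal 0 1 (r * Real.sin θ) *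
            (Real.sign (Real.cos θ + σ * Real.sin θ) - Real.sign (Real.cos θ))^2))
        = (gaussianPDFReal 0 1 (r * Real.cos θ) * gaussianPDFReal 0 1 (r * Real.sin θ)) *
            (r * (Real.sign (Real.cos θ + σ * Real.sin θ) - Real.sign (Real.cos θ))^2) := by
          ring
      _ = ((2*π)⁻¹ * (r * Real.exp (-r^2/2))) *
            (Real.sign (Real.cos θ + σ * Real.sin θ) - Real.sign (Real.cos θ))^2 := by
          rw [hg]; ring
  rw [setIntegral_congr_fun (measurableSet_Ioi.prod measurableSet_Ioo) hcongr]
  rw [Measure.volume_eq_prod, setIntegral_prod_mul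
    (fun r : ℝ => (2*π)⁻¹ * (r * Real.exp (-r^2/2)))
    (fun θ : ℝ => (Real.sign (Real.cos θ + σ * Real.sin θ) - Real.sign (Real.cos θ))^2)
    (Ioi 0) (Ioo (-π) π)]
  have h1 : ∫ r in Ioi (0:ℝ), (2*π)⁻¹ * (r * Real.exp (-r^2/2)) = (2*π)⁻¹ := by
    rw [integral_const_mul]
    have h2 : ∀ r : ℝ, -r^2/2 = -(2⁻¹ * r^2) := fun r => by ring
    simp_rw [h2]
    rw [vsc_r_integral]
    norm_num
  rw [h1, vsc_angle_integral σ hσ]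
  field_simp
  ring

lemma vsc_gauss_neg (w : ℝ≥0) :
    Measure.map (fun x : ℝ => -x) (gaussianReal 0 w) = gaussianReal 0 w := by
  have h := gaussianReal_map_const_mul (μ := 0) (v := w) (-1)
  have h2 : NNReal.mk ((-1:ℝ)^2) (sq_nonneg _) = 1 := by
    ext; norm_num
  rw [h2, one_mul, mul_zero] at h
  rw [← h]
  congr 1
  funext x
  simp


end VSCHelpers

/-- If `X ~ N(0,1)` and `Δ ~ N(0,σ²)` are independent (with `σ > 0`) and
`γ = sign(X + Δ) − sign X`, then `Var γ = E[γ²] = (4/π)·arctan σ`.  Here `Real.sign t` is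
`1` if `t > 0`, `-1` if `t < 0` and `0` if `t = 0`. -/
theorem variance_sign_change
    {Ω : Type*} [MeasurableSpace Ω] (μ : Measure Ω) [IsProbabilityMeasure μ]
    (σ : ℝ) (hσ : 0 < σ) (X Δ : Ω → ℝ)
    (hX : Measure.map X μ = gaussianReal 0 1)
    (hΔ : Measure.map Δ μ = gaussianReal 0 ⟨σ ^ 2, sq_nonneg σ⟩)
    (hXΔ : IndepFun X Δ μ) :
    variance (fun ω => Real.sign (X ω + Δ ω) - Real.sign (X ω)) μ
        = ∫ ω, (Real.sign (X ω + Δ ω) - Real.sign (X ω)) ^ 2 ∂μ ∧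
      ∫ ω, (Real.sign (X ω + Δ ω) - Real.sign (X ω)) ^ 2 ∂μ
        = (4 / Real.pi) * Real.arctan σ := by
  have hπ : 0 < π := Real.pi_pos
  set v : ℝ≥0 := ⟨σ ^ 2, sq_nonneg σ⟩ with hv
  have hXm : AEMeasurable X μ := aemeasurable_of_map_neZero (by rw [hX]; infer_instance)
  have hΔm : AEMeasurable Δ μ := aemeasurable_of_map_neZero (by rw [hΔ]; infer_instance)
  have haem : AEMeasurable (fun ω => (X ω, Δ ω)) μ := hXm.prodMk hΔm
  set m : Measure (ℝ × ℝ) := (gaussianReal 0 1).prod (gaussianReal 0 v) with hm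
  have hmap : μ.map (fun ω => (X ω, Δ ω)) = m := by
    rw [hm, ← hX, ← hΔ]
    exact (indepFun_iff_map_prod_eq_prod_map_map hXm hΔm).mp hXΔ
  set k : ℝ × ℝ → ℝ := fun p => Real.sign (p.1 + p.2) - Real.sign p.1 with hk
  have hkm : Measurable k :=
    (vsc_measurable_sign.comp (measurable_fst.add measurable_snd)).sub
      (vsc_measurable_sign.comp measurable_fst)
  -- transfer of the integrals to ℝ²
  have hsq : ∫ ω, (Real.sign (X ω + Δ ω) - Real.sign (X ω))^2 ∂μ
      = ∫ p, (k p)^2 ∂m := by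
    rw [← hmap, integral_map haem ((hkm.pow_const 2).aestronglyMeasurable)]
  have hmean : ∫ ω, (Real.sign (X ω + Δ ω) - Real.sign (X ω)) ∂μ
      = ∫ p, k p ∂m := by
    rw [← hmap, integral_map haem hkm.aestronglyMeasurable]
  -- mean zero by symmetry
  have hmneg : Measure.map (fun p : ℝ × ℝ => (-p.1, -p.2)) m = m := by
    rw [hm]
    have h1 : (fun p : ℝ × ℝ => (-p.1, -p.2))
        = Prod.map (fun x : ℝ => -x) (fun x : ℝ => -x) := rfl
    rw [h1, ← Measure.map_prod_map _ _ measurable_neg measurable_neg,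
      vsc_gauss_neg, vsc_gauss_neg]
  have hEk : ∫ p, k p ∂m = 0 := by
    have h1 : ∫ p, k p ∂m = ∫ p : ℝ × ℝ, k (-p.1, -p.2) ∂m := by
      conv_lhs => rw [← hmneg]
      exact integral_map (measurable_fst.neg.prodMk measurable_snd.neg).aemeasurable
        hkm.aestronglyMeasurable
    have h2 : (fun p : ℝ × ℝ => k (-p.1, -p.2)) = fun p => -k p := by
      funext p
      simp only [hk]
      rw [show -p.1 + -p.2 = -(p.1 + p.2) by ring, Real.sign_neg, Real.sign_neg]
      ring
    rw [h2, integral_neg] at h1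
    linarith
  -- boundedness
  have hfbd : ∀ ω, ‖Real.sign (X ω + Δ ω) - Real.sign (X ω)‖ ≤ 2 := by
    intro ω
    calc ‖Real.sign (X ω + Δ ω) - Real.sign (X ω)‖
        ≤ ‖Real.sign (X ω + Δ ω)‖ + ‖Real.sign (X ω)‖ := norm_sub_le _ _
      _ ≤ 1 + 1 := by
          rw [Real.norm_eq_abs, Real.norm_eq_abs]
          exact add_le_add (vsc_abs_sign_le _) (vsc_abs_sign_le _)
      _ = 2 := by norm_num
  have hmem : MemLp (fun ω => Real.sign (X ω + Δ ω) - Real.sign (X ω)) 2 μ :=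
    MemLp.of_bound (hkm.comp_aemeasurable haem).aestronglyMeasurable 2
      (Filter.Eventually.of_forall hfbd)
  constructor
  · rw [variance_eq_sub hmem]
    have h0 : μ[(fun ω => Real.sign (X ω + Δ ω) - Real.sign (X ω))] = 0 := by
      rw [hmean]; exact hEk
    rw [h0]
    simp [Pi.pow_apply]
  · rw [hsq]
    -- change of variables in the second coordinate
    have hνσ : gaussianReal 0 v = Measure.map (fun x : ℝ => σ * x) (gaussianReal 0 1) := by
      have h := gaussianReal_map_const_mul (μ := 0) (v := 1) σ
      rw [mul_zero, mul_one] at h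
      exact h.symm
    have hm2 : m = Measure.map (fun p : ℝ × ℝ => (p.1, σ * p.2))
        ((gaussianReal 0 1).prod (gaussianReal 0 1)) := by
      rw [hm, hνσ]
      have h1 : (fun p : ℝ × ℝ => (p.1, σ * p.2))
          = Prod.map (id : ℝ → ℝ) (fun x : ℝ => σ * x) := rfl
      rw [h1, ← Measure.map_prod_map _ _ measurable_id (measurable_const_mul σ),
        Measure.map_id]
    set k2 : ℝ × ℝ → ℝ := fun p => (Real.sign (p.1 + σ * p.2) - Real.sign p.1)^2 with hk2
    have hk2m : Measurable k2 :=
      ((vsc_measurable_sign.comp (measurable_fst.add (measurable_snd.const_mul σ))).sub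
        (vsc_measurable_sign.comp measurable_fst)).pow_const 2
    have hstep1 : ∫ p, (k p)^2 ∂m
        = ∫ p, k2 p ∂((gaussianReal 0 1).prod (gaussianReal 0 1)) := by
      rw [hm2, integral_map (measurable_fst.prodMk (measurable_snd.const_mul σ)).aemeasurable
        ((hkm.pow_const 2).aestronglyMeasurable)]
    have hk2bd : ∀ p : ℝ × ℝ, ‖k2 p‖ ≤ 4 := by
      intro p
      have hd : ‖Real.sign (p.1 + σ * p.2) - Real.sign p.1‖ ≤ 2 := by
        calc ‖Real.sign (p.1 + σ * p.2) - Real.sign p.1‖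
            ≤ ‖Real.sign (p.1 + σ * p.2)‖ + ‖Real.sign p.1‖ := norm_sub_le _ _
          _ ≤ 1 + 1 := by
              rw [Real.norm_eq_abs, Real.norm_eq_abs]
              exact add_le_add (vsc_abs_sign_le _) (vsc_abs_sign_le _)
          _ = 2 := by norm_num
      calc ‖k2 p‖ = ‖Real.sign (p.1 + σ * p.2) - Real.sign p.1‖^2 := by
            rw [hk2]; exact norm_pow _ 2
        _ ≤ 2^2 := by
            apply pow_le_pow_left₀ (norm_nonneg _) hd
        _ = 4 := by norm_num
    have hint1 : Integrable k2 ((gaussianReal 0 1).prod (gaussianReal 0 1)) :=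
      Integrable.mono' (integrable_const (4:ℝ)) hk2m.aestronglyMeasurable
        (Filter.Eventually.of_forall hk2bd)
    have hgg : Integrable (fun p : ℝ × ℝ => gaussianPDFReal 0 1 p.1 * gaussianPDFReal 0 1 p.2)
        (volume.prod volume) :=
      (integrable_gaussianPDFReal 0 1).mul_prod (integrable_gaussianPDFReal 0 1)
    have hint2 : Integrable
        (fun p : ℝ × ℝ => gaussianPDFReal 0 1 p.1 * (gaussianPDFReal 0 1 p.2 * k2 p))
        (volume.prod volume) := by
      have h1 := hgg.bdd_mul (c := 4) hk2m.aestronglyMeasurable (Filter.Eventually.of_forall hk2bd)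
      exact h1.congr (Filter.Eventually.of_forall fun p => by ring)
    calc ∫ p, (k p)^2 ∂m
        = ∫ p, k2 p ∂((gaussianReal 0 1).prod (gaussianReal 0 1)) := hstep1
      _ = ∫ x, ∫ y, k2 (x, y) ∂(gaussianReal 0 1) ∂(gaussianReal 0 1) :=
          integral_prod k2 hint1
      _ = ∫ x, (∫ y, gaussianPDFReal 0 1 y * k2 (x, y)) ∂(gaussianReal 0 1) := by
          congr 1
          funext x
          exact vsc_integral_gaussian_one _
      _ = ∫ x, gaussianPDFReal 0 1 x * (∫ y, gaussianPDFReal 0 1 y * k2 (x, y)) :=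
          vsc_integral_gaussian_one _
      _ = ∫ x, ∫ y, gaussianPDFReal 0 1 x * (gaussianPDFReal 0 1 y * k2 (x, y)) := by
          congr 1
          funext x
          exact (integral_const_mul _ _).symm
      _ = ∫ p : ℝ × ℝ, gaussianPDFReal 0 1 p.1 * (gaussianPDFReal 0 1 p.2 * k2 p)
            ∂(volume.prod volume) := (integral_prod _ hint2).symm
      _ = (4/π) * arctan σ := by
          rw [← Measure.volume_eq_prod]
          exact vsc_plane_integral σ hσ
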